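/- Let p be a nonnegative integer and q a positive even integer with gcd(p,q) = 1. Then ρ(F_{ℓ,α,θ}) = p/q if, and only if, F_{ℓ,α,θ}^q(a₀) = a₀ + p. -/

import Mathlib

open Real Filter Set

/-- Rotation number of a lift `T` of a circle homeomorphism,
defined as the limit of `T^[n] 0 / n` (which exists and is independent
of the base point for lifts of orientation-preserving circle homeos). -/
noncomputable def rotationNumber (T : ℝ → ℝ) : ℝ :=
  limUnder atTop (fun n : ℕ => T^[n] 0 / (n : ℝ))

/-- The expansion factor `Λ = sin(θ+α)/sin(θ−α)`. -/
noncomputable def Lam (α θ : ℝ) : ℝ := Real.sin (θ + α) / Real.sin (θ - α)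

/-- The break point of increase `a₀ = (tan θ − 2ℓ)/(2 tan θ)`. -/
noncomputable def brk0 (ℓ θ : ℝ) : ℝ := (Real.tan θ - 2 * ℓ) / (2 * Real.tan θ)

/-- The break point of decrease `a₁ = −(2ℓ + tan α)/(2 tan θ)`. -/
noncomputable def brk1 (ℓ α θ : ℝ) : ℝ := -(2 * ℓ + Real.tan α) / (2 * Real.tan θ)

/-- The two-piece definition of the lift on the fundamental interval `[a₁, a₁+1)`. -/
noncomputable def Ftrap0 (ℓ α θ x : ℝ) : ℝ :=
  if x ≤ brk0 ℓ θ then -brk1 ℓ α θ + (Lam α θ)⁻¹ * (x - brk1 ℓ α θ)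
  else 1 - brk0 ℓ θ + Lam α θ * (x - brk0 ℓ θ)

/-- The lift `F_{ℓ,α,θ} : ℝ → ℝ` of the Poincaré map of the internal-wave
billiard in a rectangular trapezoid: it is given by the two-piece formula on
`[a₁, a₁+1)` and extended by `F(x+k) = F(x)+k` for `k ∈ ℤ`. -/
noncomputable def Ftrap (ℓ α θ x : ℝ) : ℝ :=
  Ftrap0 ℓ α θ (x - ⌊x - brk1 ℓ α θ⌋) + ⌊x - brk1 ℓ α θ⌋

namespace Stmt6

open Real Set Filter

/-- Abstract core structure: a piecewise linear circle lift with two branches. -/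
structure Core (F : ℝ → ℝ) (A B L : ℝ) : Prop where
  hL : 1 < L
  hB2 : -(1/2 : ℝ) < B
  hB0 : B < 0
  hA0 : 0 < A
  hA2 : A < 1/2
  key : L * (1 + B - A) = A - B
  hcon : ∀ k : ℤ, ∀ x ∈ Icc (B + k) (A + k), F x = (k : ℝ) - B + L⁻¹ * (x - (B + k))
  hexp : ∀ k : ℤ, ∀ x ∈ Icc (A + k) (B + 1 + k), F x = 1 - A + (k : ℝ) + L * (x - (A + k))

namespace Core

variable {F : ℝ → ℝ} {A B L : ℝ} (hc : Core F A B L)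
include hc

lemma hL0 : (0:ℝ) < L := lt_trans one_pos hc.hL
lemma hLne : L ≠ 0 := ne_of_gt hc.hL0
lemma hLi1 : L⁻¹ < 1 := by
  rw [inv_lt_one₀ hc.hL0]; exact hc.hL
lemma hLi0 : (0:ℝ) < L⁻¹ := inv_pos.2 hc.hL0
lemma hBA : B < A := hc.hB0.trans hc.hA0
lemma hAB1 : A < B + 1 := by linarith [hc.hA2, hc.hB2]
lemma keyi : L⁻¹ * (A - B) = 1 + B - A := by
  rw [← hc.key, inv_mul_cancel_left₀ hc.hLne]

lemma FB (k : ℤ) : F (B + k) = (k:ℝ) - B := by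
  rw [hc.hcon k (B + k) ⟨le_refl _, by linarith [hc.hBA]⟩]; ring
lemma FA (k : ℤ) : F (A + k) = 1 - A + k := by
  rw [hc.hexp k (A + k) ⟨le_refl _, by linarith [hc.hAB1]⟩]; ring
lemma FB1 (k : ℤ) : F (B + 1 + k) = 1 - B + k := by
  rw [hc.hexp k (B + 1 + k) ⟨by linarith [hc.hAB1], le_refl _⟩]
  have := hc.key; nlinarith [hc.key]

/-- difference formulas on branches -/
lemma con_diff (k : ℤ) {x y : ℝ} (hx : x ∈ Icc (B + (k:ℝ)) (A + k)) (hy : y ∈ Icc (B + (k:ℝ)) (A + k)) :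
    F y - F x = L⁻¹ * (y - x) := by
  rw [hc.hcon k x hx, hc.hcon k y hy]; ring
lemma exp_diff (k : ℤ) {x y : ℝ} (hx : x ∈ Icc (A + (k:ℝ)) (B + 1 + k)) (hy : y ∈ Icc (A + (k:ℝ)) (B + 1 + k)) :
    F y - F x = L * (y - x) := by
  rw [hc.hexp k x hx, hc.hexp k y hy]; ring

/-- cover: every point lies in some branch interval -/
lemma cover (x : ℝ) : ∃ k : ℤ, x ∈ Icc (B + (k:ℝ)) (A + k) ∨ x ∈ Icc (A + (k:ℝ)) (B + 1 + k) := by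
  set k := ⌊x - B⌋ with hk
  have h1 : (k:ℝ) ≤ x - B := Int.floor_le _
  have h2 : x - B < k + 1 := Int.lt_floor_add_one _
  refine ⟨k, ?_⟩
  rcases le_or_gt x (A + k) with h | h
  · exact Or.inl ⟨by linarith, h⟩
  · exact Or.inr ⟨le_of_lt h, by linarith⟩

end Core
end Stmt6

namespace Stmt6
namespace Core
set_option linter.unusedSectionVars false

variable {F : ℝ → ℝ} {A B L : ℝ} (hc : Core F A B L)
include hc

/-- strict monotonicity within one fundamental interval -/
lemma smono_fund (k : ℤ) {x y : ℝ} (hx : B + (k:ℝ) ≤ x) (hxy : x < y) (hy : y ≤ B + 1 + k) :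
    F x < F y := by
  rcases le_or_gt y (A + k) with h | h
  · have := hc.con_diff k (x := x) (y := y) ⟨hx, by linarith⟩ ⟨by linarith, h⟩
    nlinarith [hc.hLi0]
  rcases le_or_gt (A + (k:ℝ)) x with h' | h'
  · have := hc.exp_diff k (x := x) (y := y) ⟨h', by linarith⟩ ⟨by linarith, hy⟩
    nlinarith [hc.hL0]
  · have h1 := hc.con_diff k (x := x) (y := A + k) ⟨hx, by linarith⟩ ⟨by linarith, le_refl _⟩
    have h2 := hc.exp_diff k (x := A + k) (y := y) ⟨le_refl _, by linarith⟩ ⟨by linarith, hy⟩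
    nlinarith [hc.hLi0, hc.hL0]

lemma mono_fund (k : ℤ) {x y : ℝ} (hx : B + (k:ℝ) ≤ x) (hxy : x ≤ y) (hy : y ≤ B + 1 + k) :
    F x ≤ F y := by
  rcases eq_or_lt_of_le hxy with rfl | h
  · exact le_refl _
  · exact le_of_lt (hc.smono_fund k hx h hy)

lemma mono : StrictMono F := by
  intro x y hxy
  set kx := ⌊x - B⌋ with hkx
  set ky := ⌊y - B⌋ with hky
  have hx1 : (kx:ℝ) ≤ x - B := Int.floor_le _
  have hx2 : x - B < kx + 1 := Int.lt_floor_add_one _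
  have hy1 : (ky:ℝ) ≤ y - B := Int.floor_le _
  have hy2 : y - B < ky + 1 := Int.lt_floor_add_one _
  have hkk : kx ≤ ky := by
    apply Int.floor_le_floor; linarith
  rcases eq_or_lt_of_le hkk with he | hlt
  · exact hc.smono_fund kx (by linarith) hxy (by rw [he]; linarith)
  · have hkR : (kx:ℝ) + 1 ≤ ky := by exact_mod_cast Int.add_one_le_iff.2 hlt
    calc F x < F (B + 1 + kx) := hc.smono_fund kx (by linarith) (by linarith) (le_refl _)
    _ = 1 - B + kx := hc.FB1 kx
    _ ≤ (ky:ℝ) - B := by linarith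
    _ = F (B + ky) := (hc.FB ky).symm
    _ ≤ F y := hc.mono_fund ky (le_refl _) (by linarith) (by linarith)

lemma map_add_int (x : ℝ) (n : ℤ) : F (x + n) = F x + n := by
  rcases hc.cover x with ⟨k, hk | hk⟩
  · rw [hc.hcon k x hk, hc.hcon (k + n) (x + n) (by push_cast; constructor <;> [linarith [hk.1]; linarith [hk.2]])]
    push_cast; ring
  · rw [hc.hexp k x hk, hc.hexp (k + n) (x + n) (by push_cast; constructor <;> [linarith [hk.1]; linarith [hk.2]])]
    push_cast; ring

lemma map_add_one (x : ℝ) : F (x + 1) = F x + 1 := by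
  simpa using hc.map_add_int x 1

lemma surj : Function.Surjective F := by
  intro y
  set k := ⌊y + B⌋ with hk
  have h1 : (k:ℝ) ≤ y + B := Int.floor_le _
  have h2 : y + B < k + 1 := Int.lt_floor_add_one _
  rcases le_or_gt y (1 - A + k) with h | h
  · refine ⟨B + k + L * (y - k + B), ?_⟩
    have hmem : B + (k:ℝ) + L * (y - k + B) ∈ Icc (B + (k:ℝ)) (A + k) := by
      constructor
      · nlinarith [hc.hL0]
      · nlinarith [hc.hL0, hc.key]
    rw [hc.hcon k _ hmem]
    rw [show B + (k:ℝ) + L * (y - k + B) - (B + k) = L * (y - k + B) by ring,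
      inv_mul_cancel_left₀ hc.hLne]
    ring
  · refine ⟨A + k + L⁻¹ * (y - (1 - A + k)), ?_⟩
    have hmem : A + (k:ℝ) + L⁻¹ * (y - (1 - A + k)) ∈ Icc (A + (k:ℝ)) (B + 1 + k) := by
      constructor
      · nlinarith [hc.hLi0]
      · have := hc.keyi; nlinarith [hc.hLi0]
    rw [hc.hexp k _ hmem]
    rw [show A + (k:ℝ) + L⁻¹ * (y - (1 - A + k)) - (A + k) = L⁻¹ * (y - (1 - A + k)) by ring,
      mul_inv_cancel_left₀ hc.hLne]
    ring

lemma cont : Continuous F := hc.mono.monotone.continuous_of_surjective hc.surj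

/-- the reversing involution identity: `F (-F x) = -x`. -/
lemma finv (x : ℝ) : F (-F x) = -x := by
  have hLL : ∀ t : ℝ, L * (L⁻¹ * t) = t := fun t => by rw [mul_inv_cancel_left₀ hc.hLne]
  have hLL' : ∀ t : ℝ, L⁻¹ * (L * t) = t := fun t => by rw [inv_mul_cancel_left₀ hc.hLne]
  rcases hc.cover x with ⟨k, hk | hk⟩
  · have hFx := hc.hcon k x hk
    have hmem : -F x ∈ Icc (A + ((-k-1 : ℤ):ℝ)) (B + 1 + ((-k-1:ℤ):ℝ)) := by
      rw [hFx]; push_cast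
      constructor
      · have h := hc.keyi
        have : L⁻¹ * (x - (B + k)) ≤ L⁻¹ * (A - B) := by
          apply mul_le_mul_of_nonneg_left _ (le_of_lt hc.hLi0)
          linarith [hk.2]
        linarith
      · have : 0 ≤ L⁻¹ * (x - (B + k)) := by
          apply mul_nonneg (le_of_lt hc.hLi0); linarith [hk.1]
        linarith
    rw [hc.hexp _ _ hmem, hFx]
    push_cast
    rw [show -((k:ℝ) - B + L⁻¹ * (x - (B + k))) - (A + (-k - 1)) =
      (1 + B - A) - L⁻¹ * (x - (B+k)) by ring]
    rw [mul_sub, hLL, hc.key]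
    ring
  · have hFx := hc.hexp k x hk
    have hmem : -F x ∈ Icc (B + ((-k-1 : ℤ):ℝ)) (A + ((-k-1:ℤ):ℝ)) := by
      rw [hFx]; push_cast
      constructor
      · have h := hc.key
        have : L * (x - (A + k)) ≤ L * (B + 1 + k - (A + k)) := by
          apply mul_le_mul_of_nonneg_left _ (le_of_lt hc.hL0)
          linarith [hk.2]
        nlinarith
      · have : 0 ≤ L * (x - (A + k)) := by
          apply mul_nonneg (le_of_lt hc.hL0); linarith [hk.1]
        linarith
    rw [hc.hcon _ _ hmem, hFx]
    push_cast
    rw [show -(1 - A + (k:ℝ) + L * (x - (A + k))) - (B + (-k - 1)) =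
      (A - B) - L * (x - (A + k)) by ring]
    rw [mul_sub, hLL', hc.keyi]
    ring

end Core
end Stmt6

namespace Stmt6
namespace Core
set_option linter.unusedSectionVars false

variable {F : ℝ → ℝ} {A B L : ℝ} (hc : Core F A B L)
include hc

lemma iter_add_int (n : ℕ) (x : ℝ) (m : ℤ) : F^[n] (x + m) = F^[n] x + m := by
  induction n generalizing x with
  | zero => simp
  | succ n ih =>
    rw [Function.iterate_succ_apply, Function.iterate_succ_apply, hc.map_add_int, ih]

lemma iter_mono (n : ℕ) : StrictMono F^[n] := hc.mono.iterate n

lemma iter_cont (n : ℕ) : Continuous F^[n] := hc.cont.iterate n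

/-- iterated reversibility: `F^[n] (-F (F^[n] x)) = -F x`. -/
lemma iter_finv (n : ℕ) (x : ℝ) : F^[n] (-F (F^[n] x)) = -F x := by
  induction n with
  | zero => simp
  | succ n ih =>
    have h1 : F^[n+1] x = F (F^[n] x) := Function.iterate_succ_apply' F n x
    have h2 : ∀ y, F^[n+1] y = F^[n] (F y) := fun y => Function.iterate_succ_apply F n y
    rw [h2, h1, hc.finv (F (F^[n] x)), ← h1, h1, ih]

/-- The bundled lift. -/
noncomputable def lift : CircleDeg1Lift :=
  ⟨⟨F, hc.mono.monotone⟩, hc.map_add_one⟩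

lemma lift_coe : ⇑hc.lift = F := rfl

lemma lift_pow (n : ℕ) : ⇑(hc.lift ^ n) = F^[n] := by
  rw [CircleDeg1Lift.coe_pow]; rfl

lemma rot_eq : rotationNumber F = CircleDeg1Lift.translationNumber hc.lift := by
  apply Filter.Tendsto.limUnder_eq
  have h := hc.lift.tendsto_translation_number₀
  refine h.congr fun n => ?_
  rw [hc.lift_pow n]

lemma rot_rat_iff {p : ℤ} {q : ℕ} (hq : 0 < q) :
    rotationNumber F = (p : ℝ) / (q : ℝ) ↔ ∃ x, F^[q] x = x + (p:ℝ) := by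
  rw [hc.rot_eq, CircleDeg1Lift.translationNumber_eq_rat_iff hc.lift hc.cont hq]
  constructor
  · rintro ⟨x, hx⟩
    exact ⟨x, by rw [← hc.lift_pow q, hx]⟩
  · rintro ⟨x, hx⟩
    exact ⟨x, by rw [hc.lift_pow q, hx]⟩

lemma rot_int_iter {d : ℕ} (hd : 0 < d) {r : ℤ} {x : ℝ} (hx : F^[d] x = x + r) :
    rotationNumber F = (r : ℝ) / (d : ℝ) := by
  rw [hc.rot_rat_iff hd]
  exact ⟨x, hx⟩

end Core
end Stmt6

namespace Stmt6

open Real Set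

theorem ftrap_core {ℓ α θ : ℝ} (hℓ : 0 < ℓ) (hα : 0 < α) (hαθ : α < θ)
    (hθ : θ < π / 2) (htan : Real.tan θ > 2 * ℓ + Real.tan α) :
    Core (Ftrap ℓ α θ) (brk0 ℓ θ) (brk1 ℓ α θ) (Lam α θ) := by
  have hθ0 : 0 < θ := hα.trans hαθ
  have hα2 : α < π / 2 := hαθ.trans hθ
  have hT : 0 < Real.tan θ := Real.tan_pos_of_pos_of_lt_pi_div_two hθ0 hθ
  have hS : 0 < Real.tan α := Real.tan_pos_of_pos_of_lt_pi_div_two hα hα2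
  have hcθ : 0 < Real.cos θ := Real.cos_pos_of_mem_Ioo ⟨by linarith [Real.pi_pos], hθ⟩
  have hcα : 0 < Real.cos α := Real.cos_pos_of_mem_Ioo ⟨by linarith [Real.pi_pos], hα2⟩
  have hsα : 0 < Real.sin α := Real.sin_pos_of_pos_of_lt_pi hα (by linarith [Real.pi_gt_three])
  have hs2 : 0 < Real.sin (θ - α) := Real.sin_pos_of_pos_of_lt_pi (by linarith)
    (by linarith [Real.pi_gt_three])
  set T := Real.tan θ with hTdef
  set S := Real.tan α with hSdef
  set A := brk0 ℓ θ with hAdef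
  set B := brk1 ℓ α θ with hBdef
  set L := Lam α θ with hLdef
  have hs1 : Real.sin (θ - α) < Real.sin (θ + α) := by
    rw [Real.sin_add, Real.sin_sub]; nlinarith
  have hL : 1 < L := by
    rw [hLdef, Lam, lt_div_iff₀ hs2]; linarith
  have hL0 : (0:ℝ) < L := lt_trans one_pos hL
  have hA0 : 0 < A := by
    rw [hAdef, brk0]
    apply div_pos (by linarith) (by linarith)
  have hA2 : A < 1/2 := by
    rw [hAdef, brk0, div_lt_iff₀ (by linarith : (0:ℝ) < 2 * T)]
    linarith
  have hB0 : B < 0 := by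
    rw [hBdef, brk1]
    apply div_neg_of_neg_of_pos (by linarith) (by linarith)
  have hB2 : -(1/2 : ℝ) < B := by
    rw [hBdef, brk1, neg_div, neg_lt_neg_iff, div_lt_iff₀ (by linarith : (0:ℝ) < 2 * T)]
    linarith
  have hsub : T - S = Real.sin (θ - α) / (Real.cos θ * Real.cos α) := by
    rw [hTdef, hSdef, Real.tan_eq_sin_div_cos, Real.tan_eq_sin_div_cos, Real.sin_sub]
    field_simp
  have hadd : T + S = Real.sin (θ + α) / (Real.cos θ * Real.cos α) := by
    rw [hTdef, hSdef, Real.tan_eq_sin_div_cos, Real.tan_eq_sin_div_cos, Real.sin_add]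
    field_simp
  have e1 : 1 + B - A = (T - S)/(2*T) := by
    rw [hAdef, hBdef, brk0, brk1, ← hTdef, ← hSdef]; field_simp; ring
  have e2 : A - B = (T + S)/(2*T) := by
    rw [hAdef, hBdef, brk0, brk1, ← hTdef, ← hSdef]; field_simp; ring
  have hkey : L * (1 + B - A) = A - B := by
    rw [e1, e2, hsub, hadd, hLdef, Lam]
    field_simp
  have hkeyi : L⁻¹ * (A - B) = 1 + B - A := by
    rw [← hkey, inv_mul_cancel_left₀ (ne_of_gt hL0)]
  have hBA : B < A := hB0.trans hA0
  have hAB1 : A < B + 1 := by linarith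
  refine ⟨hL, hB2, hB0, hA0, hA2, hkey, ?_, ?_⟩
  · -- contracting branch
    intro k x hx
    have hfl : ⌊x - B⌋ = k := by
      rw [Int.floor_eq_iff]
      exact ⟨by linarith [hx.1], by linarith [hx.2]⟩
    show Ftrap0 ℓ α θ (x - ⌊x - B⌋) + (⌊x - B⌋ : ℝ) = _
    rw [hfl, Ftrap0, if_pos (by rw [← hAdef]; linarith [hx.2] : x - (k:ℝ) ≤ brk0 ℓ θ)]
    rw [← hBdef, ← hLdef]
    ring
  · -- expanding branch
    intro k x hx
    rcases eq_or_lt_of_le hx.2 with heq | hlt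
    · -- x = B + 1 + k
      subst heq
      have hfl : ⌊B + 1 + (k:ℝ) - B⌋ = k + 1 := by
        rw [show B + 1 + (k:ℝ) - B = ((k+1:ℤ):ℝ) by push_cast; ring, Int.floor_intCast]
      show Ftrap0 ℓ α θ (B + 1 + (k:ℝ) - ⌊B + 1 + (k:ℝ) - B⌋) + ((⌊B + 1 + (k:ℝ) - B⌋ : ℤ) : ℝ) = _
      rw [hfl, Ftrap0]
      have harg : B + 1 + (k:ℝ) - ((k+1:ℤ):ℝ) = B := by push_cast; ring
      rw [harg, if_pos (by rw [← hAdef]; linarith : B ≤ brk0 ℓ θ)]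
      rw [← hBdef, ← hLdef, sub_self, mul_zero]
      push_cast
      linear_combination -hkey
    · have hfl : ⌊x - B⌋ = k := by
        rw [Int.floor_eq_iff]
        exact ⟨by linarith [hx.1], by linarith⟩
      show Ftrap0 ℓ α θ (x - ⌊x - B⌋) + (⌊x - B⌋ : ℝ) = _
      rw [hfl, Ftrap0]
      rcases le_or_gt (x - (k:ℝ)) A with hle | hgt
      · have hxeq : x = A + k := by linarith [hx.1]
        rw [if_pos (by rw [← hAdef]; exact hle)]
        rw [← hBdef, ← hLdef, hxeq]
        rw [show A + (k:ℝ) - k - B = A - B by ring]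
        rw [hkeyi]; ring
      · rw [if_neg (by rw [← hAdef]; linarith)]
        rw [← hAdef, ← hLdef]
        ring

end Stmt6

namespace Stmt6

open Real Set

/-- branch indicators -/
def InExp (A B : ℝ) (x : ℝ) : Prop := ∃ k : ℤ, A + (k:ℝ) < x ∧ x < B + 1 + k
def InCon (A B : ℝ) (x : ℝ) : Prop := ∃ k : ℤ, B + (k:ℝ) < x ∧ x < A + k

open Classical in
/-- local slope of the map at a non-break point -/
noncomputable def brSlope (A B L : ℝ) (x : ℝ) : ℝ := if InExp A B x then L else L⁻¹

namespace Core
set_option linter.unusedSectionVars false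

variable {F : ℝ → ℝ} {A B L : ℝ} (hc : Core F A B L)
include hc

lemma not_both {x : ℝ} (h1 : InCon A B x) (h2 : InExp A B x) : False := by
  obtain ⟨k, hk1, hk2⟩ := h1
  obtain ⟨k', hk1', hk2'⟩ := h2
  have hBA := hc.hBA
  have hAB1 := hc.hAB1
  have h3 : (k':ℝ) < k := by
    by_contra h
    push_neg at h
    have : (k:ℝ) ≤ k' := by exact_mod_cast h
    linarith
  have : (k':ℝ) + 1 ≤ k := by
    have : k' + 1 ≤ k := by exact_mod_cast Int.add_one_le_iff.2 (by exact_mod_cast h3)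
    exact_mod_cast this
  linarith

lemma trichotomy {x : ℝ} (hxA : ∀ k : ℤ, x ≠ A + k) (hxB : ∀ k : ℤ, x ≠ B + k) :
    InCon A B x ∨ InExp A B x := by
  obtain ⟨k, hk | hk⟩ := hc.cover x
  · left
    refine ⟨k, lt_of_le_of_ne hk.1 (fun h => hxB k h.symm), lt_of_le_of_ne hk.2 (hxA k)⟩
  · right
    refine ⟨k, lt_of_le_of_ne hk.1 (fun h => hxA k h.symm), lt_of_le_of_ne hk.2 ?_⟩
    intro h
    exact hxB (k+1) (by push_cast; linarith [h])

lemma brSlope_exp {x : ℝ} (h : InExp A B x) : brSlope A B L x = L := by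
  rw [brSlope, if_pos h]

lemma brSlope_con {x : ℝ} (h : InCon A B x) : brSlope A B L x = L⁻¹ := by
  rw [brSlope, if_neg (fun h' => hc.not_both h h')]

lemma brSlope_pos (x : ℝ) : 0 < brSlope A B L x := by
  rw [brSlope]
  split
  · exact hc.hL0
  · exact hc.hLi0

/-- powers comparison -/
lemma LL_lt1 {a b : ℕ} : L ^ a * L⁻¹ ^ b < 1 ↔ a < b := by
  rw [inv_pow, mul_inv_lt_iff₀ (pow_pos hc.hL0 b), one_mul]
  exact pow_lt_pow_iff_right₀ hc.hL

lemma LL_gt1 {a b : ℕ} : 1 < L ^ a * L⁻¹ ^ b ↔ b < a := by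
  rw [inv_pow, lt_mul_inv_iff₀ (pow_pos hc.hL0 b), one_mul]
  exact pow_lt_pow_iff_right₀ hc.hL

/-- crossing lemmas -/
lemma cross_B {t s : ℝ} (hts : t < s) (hs1 : s ≤ t + 1) (ht : InExp A B t) (hs : InCon A B s) :
    ∃ j : ℤ, t < B + (j:ℝ) ∧ B + (j:ℝ) < s := by
  obtain ⟨k, hk1, hk2⟩ := ht
  obtain ⟨k', hk1', hk2'⟩ := hs
  have hBA := hc.hBA
  have hAB1 := hc.hAB1
  have h1 : k < k' := by
    have : (k:ℝ) < k' := by linarith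
    exact_mod_cast this
  have h2 : k' < k + 2 := by
    have : (k':ℝ) < k + 2 := by linarith
    exact_mod_cast this
  have hk' : k' = k + 1 := by omega
  refine ⟨k + 1, ?_, ?_⟩
  · push_cast; linarith
  · rw [← hk']; exact hk1'

lemma cross_A {t s : ℝ} (hts : t < s) (hs1 : s ≤ t + 1) (ht : InCon A B t) (hs : InExp A B s) :
    ∃ j : ℤ, t < A + (j:ℝ) ∧ A + (j:ℝ) < s := by
  obtain ⟨k, hk1, hk2⟩ := ht
  obtain ⟨k', hk1', hk2'⟩ := hs
  have hBA := hc.hBA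
  have hAB1 := hc.hAB1
  have h1 : k' < k + 1 := by
    have : (k':ℝ) < k + 1 := by linarith
    exact_mod_cast this
  have h2 : k ≤ k' := by
    have : (k:ℝ) < k' + 1 := by linarith
    exact_mod_cast Int.lt_add_one_iff.1 (by exact_mod_cast this)
  have hk' : k' = k := by omega
  exact ⟨k, hk2, by rw [← hk']; exact hk1'⟩

end Core
end Stmt6

namespace Stmt6
namespace Core
set_option linter.unusedSectionVars false

open Finset in
lemma prod_brSlope_pos {F : ℝ → ℝ} {A B L : ℝ} (hc : Core F A B L) (g : ℕ → ℝ) (n : ℕ) :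
    0 < ∏ j ∈ Finset.range n, brSlope A B L (g j) :=
  Finset.prod_pos (fun j _ => hc.brSlope_pos _)

variable {F : ℝ → ℝ} {A B L : ℝ} (hc : Core F A B L)
include hc

lemma slope_right (u : ℝ) (n : ℕ)
    (hnb : ∀ j, j < n → InCon A B (F^[j] u) ∨ InExp A B (F^[j] u)) :
    ∃ δ, 0 < δ ∧ ∀ y ∈ Icc u (u + δ),
      F^[n] y - F^[n] u = (∏ j ∈ Finset.range n, brSlope A B L (F^[j] u)) * (y - u) := by
  induction n with
  | zero => exact ⟨1, one_pos, by simp⟩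
  | succ n ih =>
    obtain ⟨δ, hδ, haff⟩ := ih (fun j hj => hnb j (hj.trans n.lt_succ_self))
    set σ := ∏ j ∈ Finset.range n, brSlope A B L (F^[j] u) with hσdef
    have hσpos : 0 < σ := hc.prod_brSlope_pos _ n
    set t := F^[n] u with htdef
    have keymem : ∀ c : ℝ, 0 < c - t → ∀ y ∈ Icc u (u + min δ (σ⁻¹ * (c - t))),
        F^[n] y = t + σ * (y - u) ∧ t ≤ F^[n] y ∧ F^[n] y ≤ c := by
      intro c hc' y hy
      have h1 : y ∈ Icc u (u + δ) := ⟨hy.1, hy.2.trans (by simp [min_le_left])⟩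
      have h2 := haff y h1
      have h3 : σ * (y - u) ≤ σ * (σ⁻¹ * (c - t)) := by
        apply mul_le_mul_of_nonneg_left _ (le_of_lt hσpos)
        have := hy.2
        have := min_le_right δ (σ⁻¹ * (c - t))
        linarith
      rw [mul_inv_cancel_left₀ (ne_of_gt hσpos)] at h3
      have h4 : 0 ≤ σ * (y - u) := mul_nonneg (le_of_lt hσpos) (by linarith [hy.1])
      exact ⟨by linarith [h2], by linarith [h2], by linarith [h2]⟩
    rcases hnb n n.lt_succ_self with hbr | hbr
    · obtain ⟨k, hk1, hk2⟩ := hbr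
      refine ⟨min δ (σ⁻¹ * (A + k - t)), lt_min hδ (mul_pos (inv_pos.2 hσpos) (by linarith)), ?_⟩
      intro y hy
      obtain ⟨he, hge, hle⟩ := keymem (A + k) (by linarith) y hy
      have hdiff := hc.con_diff k (x := t) (y := F^[n] y)
        ⟨le_of_lt hk1, le_of_lt hk2⟩ ⟨by linarith, hle⟩
      rw [Function.iterate_succ_apply', Function.iterate_succ_apply', ← htdef]
      rw [Finset.prod_range_succ, ← hσdef, ← htdef, hc.brSlope_con ⟨k, hk1, hk2⟩]
      rw [hdiff, he]
      ring
    · obtain ⟨k, hk1, hk2⟩ := hbr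
      refine ⟨min δ (σ⁻¹ * (B + 1 + k - t)), lt_min hδ (mul_pos (inv_pos.2 hσpos) (by linarith)), ?_⟩
      intro y hy
      obtain ⟨he, hge, hle⟩ := keymem (B + 1 + k) (by linarith) y hy
      have hdiff := hc.exp_diff k (x := t) (y := F^[n] y)
        ⟨le_of_lt hk1, le_of_lt hk2⟩ ⟨by linarith, hle⟩
      rw [Function.iterate_succ_apply', Function.iterate_succ_apply', ← htdef]
      rw [Finset.prod_range_succ, ← hσdef, ← htdef, hc.brSlope_exp ⟨k, hk1, hk2⟩]
      rw [hdiff, he]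
      ring

lemma slope_left (v : ℝ) (n : ℕ)
    (hnb : ∀ j, j < n → InCon A B (F^[j] v) ∨ InExp A B (F^[j] v)) :
    ∃ δ, 0 < δ ∧ ∀ y ∈ Icc (v - δ) v,
      F^[n] y - F^[n] v = (∏ j ∈ Finset.range n, brSlope A B L (F^[j] v)) * (y - v) := by
  induction n with
  | zero => exact ⟨1, one_pos, by simp⟩
  | succ n ih =>
    obtain ⟨δ, hδ, haff⟩ := ih (fun j hj => hnb j (hj.trans n.lt_succ_self))
    set σ := ∏ j ∈ Finset.range n, brSlope A B L (F^[j] v) with hσdef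
    have hσpos : 0 < σ := hc.prod_brSlope_pos _ n
    set t := F^[n] v with htdef
    have keymem : ∀ c : ℝ, 0 < t - c → ∀ y ∈ Icc (v - min δ (σ⁻¹ * (t - c))) v,
        F^[n] y = t + σ * (y - v) ∧ c ≤ F^[n] y ∧ F^[n] y ≤ t := by
      intro c hc' y hy
      have h1 : y ∈ Icc (v - δ) v :=
        ⟨le_trans (by linarith [min_le_left δ (σ⁻¹ * (t - c))]) hy.1, hy.2⟩
      have h2 := haff y h1
      have h3 : σ * (v - y) ≤ σ * (σ⁻¹ * (t - c)) := by
        apply mul_le_mul_of_nonneg_left _ (le_of_lt hσpos)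
        have := hy.1
        have := min_le_right δ (σ⁻¹ * (t - c))
        linarith
      rw [mul_inv_cancel_left₀ (ne_of_gt hσpos)] at h3
      have h4 : 0 ≤ σ * (v - y) := mul_nonneg (le_of_lt hσpos) (by linarith [hy.2])
      refine ⟨by linarith [h2], by nlinarith [h2], by nlinarith [h2]⟩
    rcases hnb n n.lt_succ_self with hbr | hbr
    · obtain ⟨k, hk1, hk2⟩ := hbr
      refine ⟨min δ (σ⁻¹ * (t - (B + k))), lt_min hδ (mul_pos (inv_pos.2 hσpos) (by linarith)), ?_⟩
      intro y hy
      obtain ⟨he, hge, hle⟩ := keymem (B + k) (by linarith) y hy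
      have hdiff := hc.con_diff k (x := t) (y := F^[n] y)
        ⟨le_of_lt hk1, le_of_lt hk2⟩ ⟨hge, by linarith⟩
      rw [Function.iterate_succ_apply', Function.iterate_succ_apply', ← htdef]
      rw [Finset.prod_range_succ, ← hσdef, ← htdef, hc.brSlope_con ⟨k, hk1, hk2⟩]
      rw [hdiff, he]
      ring
    · obtain ⟨k, hk1, hk2⟩ := hbr
      refine ⟨min δ (σ⁻¹ * (t - (A + k))), lt_min hδ (mul_pos (inv_pos.2 hσpos) (by linarith)), ?_⟩
      intro y hy
      obtain ⟨he, hge, hle⟩ := keymem (A + k) (by linarith) y hy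
      have hdiff := hc.exp_diff k (x := t) (y := F^[n] y)
        ⟨le_of_lt hk1, le_of_lt hk2⟩ ⟨hge, by linarith⟩
      rw [Function.iterate_succ_apply', Function.iterate_succ_apply', ← htdef]
      rw [Finset.prod_range_succ, ← hσdef, ← htdef, hc.brSlope_exp ⟨k, hk1, hk2⟩]
      rw [hdiff, he]
      ring

end Core
end Stmt6

namespace Stmt6
namespace Core
set_option linter.unusedSectionVars false
set_option maxHeartbeats 1000000

open Finset

variable {F : ℝ → ℝ} {A B L : ℝ} (hc : Core F A B L)
include hc

lemma iter_comm (a b : ℕ) (x : ℝ) : F^[a] (F^[b] x) = F^[b] (F^[a] x) := by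
  rw [← Function.iterate_add_apply, add_comm, Function.iterate_add_apply]

lemma no_early {p q : ℕ} (hcop : Nat.Coprime p q)
    (hrot : rotationNumber F = (p:ℝ)/(q:ℝ)) {d : ℕ} (hd0 : 0 < d) (hdq : d < q)
    (r : ℤ) (z : ℝ) : F^[d] z ≠ z + r := by
  intro h
  have hq0 : 0 < q := hd0.trans hdq
  have h2 : rotationNumber F = (r:ℝ)/(d:ℝ) := hc.rot_int_iter hd0 h
  rw [hrot] at h2
  rw [div_eq_div_iff (by positivity) (by positivity)] at h2
  have h4 : (p:ℤ) * d = r * q := by exact_mod_cast h2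
  have h5 : (q:ℤ) ∣ (p:ℤ) * (d:ℤ) := ⟨r, by rw [h4]; ring⟩
  have h6 : q ∣ p * d := by exact_mod_cast h5
  have h7 : q ∣ d := (Nat.Coprime.dvd_of_dvd_mul_left hcop.symm h6)
  exact absurd (Nat.le_of_dvd hd0 h7) (by omega)

lemma main_core {p q m : ℕ} (hqm : q = 2 * m) (hm : 0 < m) (hcop : Nat.Coprime p q)
    (hrot : rotationNumber F = (p:ℝ) / (q:ℝ)) :
    F^[q] A = A + p ∨ F^[q] B = B + p := by
  classical
  by_contra hctr
  push_neg at hctr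
  obtain ⟨hA', hB'⟩ := hctr
  have hq0 : 0 < q := by omega
  have hq2 : 2 ≤ q := by omega
  set P : ℝ → Prop := fun x => F^[q] x = x + (p:ℝ) with hPdef
  have Padd : ∀ z (n : ℤ), P z → P (z + n) := by
    intro z n hz
    show F^[q] (z + n) = z + n + p
    rw [hc.iter_add_int, hz]; ring
  have Piter : ∀ z (j : ℕ), P z → P (F^[j] z) := by
    intro z j hz
    show F^[q] (F^[j] z) = F^[j] z + p
    rw [hc.iter_comm q j, hz, show z + (p:ℝ) = z + ((p:ℤ):ℝ) by push_cast; ring,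
      hc.iter_add_int]
    push_cast; ring
  have Pearly : ∀ (d : ℕ), 0 < d → d < q → ∀ (r : ℤ) (z : ℝ), F^[d] z ≠ z + r :=
    fun d h1 h2 r z => hc.no_early hcop hrot h1 h2 r z
  have PnotA : ∀ z, P z → ∀ (j : ℕ) (k : ℤ), F^[j] z ≠ A + k := by
    intro z hz j k he
    have h1 : P (A + k) := he ▸ Piter z j hz
    have h2 : F^[q] (A + k) = A + k + p := h1
    rw [hc.iter_add_int] at h2
    exact hA' (by linarith)
  have PnotB : ∀ z, P z → ∀ (j : ℕ) (k : ℤ), F^[j] z ≠ B + k := by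
    intro z hz j k he
    have h1 : P (B + k) := he ▸ Piter z j hz
    have h2 : F^[q] (B + k) = B + k + p := h1
    rw [hc.iter_add_int] at h2
    exact hB' (by linarith)
  have Pbranch : ∀ z, P z → ∀ j : ℕ, InCon A B (F^[j] z) ∨ InExp A B (F^[j] z) :=
    fun z hz j => hc.trichotomy (fun k => PnotA z hz j k) (fun k => PnotB z hz j k)
  -- existence of a periodic point
  obtain ⟨x₀, hx₀⟩ : ∃ x, P x := by
    have := (hc.rot_rat_iff (p := (p:ℤ)) hq0).1 (by rw [hrot]; norm_num)
    obtain ⟨x, hx⟩ := this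
    exact ⟨x, by rw [hPdef]; push_cast at hx ⊢; exact hx⟩
  -- the fundamental gap around A
  have hPclosed : IsClosed {x | P x} :=
    isClosed_eq (hc.iter_cont q) (by continuity)
  set SA := {x | P x} ∩ Icc (A - 1) A with hSAdef
  have hSAne : SA.Nonempty := by
    set k := ⌈x₀ - A⌉ with hk
    have h1 : x₀ - A ≤ k := Int.le_ceil _
    have h2 : (k:ℝ) < x₀ - A + 1 := Int.ceil_lt_add_one _
    exact ⟨x₀ + (-k : ℤ), Padd x₀ (-k) hx₀, by push_cast; constructor <;> linarith⟩
  have hSAclosed : IsClosed SA := hPclosed.inter isClosed_Icc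
  have hSAbdd : BddAbove SA := ⟨A, fun x hx => hx.2.2⟩
  set u := sSup SA with hudef
  have hu : u ∈ SA := hSAclosed.csSup_mem hSAne hSAbdd
  have huP : P u := hu.1
  have huA : u < A := lt_of_le_of_ne hu.2.2 (fun h => hA' (by rw [← h]; exact huP))
  have huA1 : A - 1 ≤ u := hu.2.1
  -- v
  set SB := {x | P x} ∩ Icc A (A + 1) with hSBdef
  have hSBne : SB.Nonempty := ⟨u + 1, by
    have := Padd u 1 huP
    push_cast at this
    exact ⟨this, by constructor <;> linarith⟩⟩
  have hSBclosed : IsClosed SB := hPclosed.inter isClosed_Icc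
  have hSBbdd : BddBelow SB := ⟨A, fun x hx => hx.2.1⟩
  set v := sInf SB with hvdef
  have hv : v ∈ SB := hSBclosed.csInf_mem hSBne hSBbdd
  have hvP : P v := hv.1
  have hvA : A < v := lt_of_le_of_ne hv.2.1 (fun h => hA' (by rw [h]; exact hvP))
  have hvu1 : v ≤ u + 1 := csInf_le hSBbdd (by
    have := Padd u 1 huP
    push_cast at this
    exact ⟨this, by constructor <;> linarith⟩)
  have huv : u < v := huA.trans hvA
  have hgap : ∀ z ∈ Ioo u v, ¬ P z := by
    intro z hz hPz
    rcases le_or_gt z A with h | h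
    · have : z ∈ SA := ⟨hPz, by constructor <;> [linarith [hz.1]; exact h]⟩
      exact absurd (le_csSup hSAbdd this) (not_le.2 hz.1)
    · have : z ∈ SB := ⟨hPz, by constructor <;> [linarith; linarith [hz.2]]⟩
      exact absurd (csInf_le hSBbdd this) (not_le.2 hz.2)
  have hlt1 : v - u < 1 := by
    rcases lt_or_eq_of_le hvu1 with h | h
    · linarith
    · exfalso
      -- v = u + 1 : P ⊆ u + ℤ, so F u = u + r, early period
      have honly : ∀ z, P z → z = u + (⌊z - u⌋ : ℝ) := by
        intro z hz
        by_contra hne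
        have h1 : (⌊z - u⌋ : ℝ) ≤ z - u := Int.floor_le _
        have h2 : z - u < ⌊z - u⌋ + 1 := Int.lt_floor_add_one _
        have h3 : P (z + (-⌊z - u⌋ : ℤ)) := Padd z _ hz
        push_cast at h3
        apply hgap (z + -(⌊z - u⌋:ℝ)) _ h3
        constructor
        · rcases lt_or_eq_of_le h1 with h' | h'
          · linarith
          · exfalso; exact hne (by linarith)
        · rw [h]; linarith
      have h4 := honly (F u) (Piter u 1 (by simpa using huP))
      exact Pearly 1 one_pos (by omega) ⌊F u - u⌋ u h4
  -- gaps along the orbit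
  have htsP : ∀ j : ℕ, P (F^[j] u) ∧ P (F^[j] v) := fun j => ⟨Piter u j huP, Piter v j hvP⟩
  have htslt : ∀ j : ℕ, F^[j] u < F^[j] v := fun j => hc.iter_mono j huv
  have gapj : ∀ j : ℕ, ∀ z ∈ Ioo (F^[j] u) (F^[j] v), ¬ P z := by
    intro j z hz hPz
    obtain ⟨w, hw⟩ := (hc.surj.iterate j) z
    have hw1 : u < w := (hc.iter_mono j).lt_iff_lt.1 (by rw [hw]; exact hz.1)
    have hw2 : w < v := (hc.iter_mono j).lt_iff_lt.1 (by rw [hw]; exact hz.2)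
    apply hgap w ⟨hw1, hw2⟩
    show F^[q] w = w + (p:ℝ)
    have h1 : F^[j] (F^[q] w) = F^[j] (w + (p:ℝ)) := by
      rw [hc.iter_comm j q, hw, hPz, show w + (p:ℝ) = w + ((p:ℤ):ℝ) by push_cast; ring,
        hc.iter_add_int]
      push_cast
      linarith [hw]
    exact (hc.iter_mono j).injective h1
  have hgaple1 : ∀ j : ℕ, F^[j] v ≤ F^[j] u + 1 := by
    intro j
    by_contra hcon2
    push_neg at hcon2
    apply gapj j (F^[j] u + 1) ⟨by linarith, hcon2⟩
    have := Padd (F^[j] u) 1 (htsP j).1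
    push_cast at this
    exact this
  -- disjointness of gaps containing translates of a common point
  have disj : ∀ i j : ℕ, i < j → j < q → ∀ (c : ℝ) (ki kj : ℤ),
      c + (ki:ℝ) ∈ Ioo (F^[i] u) (F^[i] v) → c + (kj:ℝ) ∈ Ioo (F^[j] u) (F^[j] v) → False := by
    intro i j hij hjq c ki kj hci hcj
    set Δ := kj - ki with hΔ
    have hd0 : 0 < j - i := by omega
    have hdq : j - i < q := by omega
    have hiterU : F^[j-i] (F^[i] u) = F^[j] u := by
      rw [← Function.iterate_add_apply]; congr 1; omega
    have hiterV : F^[j-i] (F^[i] v) = F^[j] v := by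
      rw [← Function.iterate_add_apply]; congr 1; omega
    have hgapjT : ∀ z ∈ Ioo (F^[j] u - Δ) (F^[j] v - Δ), ¬ P z := by
      intro z hz hPz
      apply gapj j (z + Δ) ⟨by linarith [hz.1], by linarith [hz.2]⟩
      have := Padd z Δ hPz
      exact this
    have hj1 : F^[j] u - Δ < c + ki := by push_cast [hΔ]; linarith [hcj.1]
    have hj2 : c + (ki:ℝ) < F^[j] v - Δ := by push_cast [hΔ]; linarith [hcj.2]
    rcases lt_trichotomy (F^[j] u - (Δ:ℝ)) (F^[i] u) with h1 | h1 | h1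
    · rcases lt_trichotomy (F^[j] v - (Δ:ℝ)) (F^[i] v) with h2 | h2 | h2
      · -- s_j - Δ ∈ gap i
        apply gapj i (F^[j] v - Δ) ⟨by linarith [hci.1, hci.2], h2⟩
        have hP2 := Padd (F^[j] v) (-Δ) (htsP j).2
        have harg : F^[j] v + ((-Δ:ℤ):ℝ) = F^[j] v - (Δ:ℝ) := by push_cast; ring
        rwa [harg] at hP2
      · -- equal: early period for F^[i] v
        apply Pearly (j - i) hd0 hdq Δ (F^[i] v)
        rw [hiterV]; linarith
      · -- t_i inside translated gap j
        apply hgapjT (F^[i] u) ⟨h1, by linarith [hci.1, hci.2]⟩ (htsP i).1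
    · -- equal: early period for F^[i] u
      apply Pearly (j - i) hd0 hdq Δ (F^[i] u)
      rw [hiterU]; linarith
    · -- t_j - Δ ∈ gap i
      apply gapj i (F^[j] u - Δ) ⟨h1, by linarith [hci.1, hci.2]⟩
      have hP2 := Padd (F^[j] u) (-Δ) (htsP j).1
      have harg : F^[j] u + ((-Δ:ℤ):ℝ) = F^[j] u - (Δ:ℝ) := by push_cast; ring
      rwa [harg] at hP2
  -- branch data
  have hbrU : ∀ j : ℕ, InCon A B (F^[j] u) ∨ InExp A B (F^[j] u) := Pbranch u huP
  have hbrV : ∀ j : ℕ, InCon A B (F^[j] v) ∨ InExp A B (F^[j] v) := Pbranch v hvP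
  -- slopes
  set e := ((range q).filter (fun j => InExp A B (F^[j] u))).card with hedef
  set f := ((range q).filter (fun j => InExp A B (F^[j] v))).card with hfdef
  set σ := ∏ j ∈ range q, brSlope A B L (F^[j] u) with hσdef
  set σ' := ∏ j ∈ range q, brSlope A B L (F^[j] v) with hσ'def
  have hprod_eq : ∀ (w : ℝ), (∀ j : ℕ, InCon A B (F^[j] w) ∨ InExp A B (F^[j] w)) →
      (∏ j ∈ range q, brSlope A B L (F^[j] w)) =
        L ^ (((range q).filter (fun j => InExp A B (F^[j] w))).card) *
        L⁻¹ ^ (q - ((range q).filter (fun j => InExp A B (F^[j] w))).card) := by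
    intro w hbr
    rw [← Finset.prod_filter_mul_prod_filter_not (range q) (fun j => InExp A B (F^[j] w))]
    congr 1
    · rw [Finset.prod_congr rfl (fun j hj => hc.brSlope_exp (Finset.mem_filter.1 hj).2),
        Finset.prod_const]
    · rw [Finset.prod_congr rfl (fun j hj => hc.brSlope_con
        ((hbr j).resolve_right (Finset.mem_filter.1 hj).2)), Finset.prod_const]
      congr 1
      have := Finset.card_filter_add_card_filter_not
        (s := range q) (p := fun j => InExp A B (F^[j] w))
      simp only [Finset.card_range] at this
      omega
  have hσe : σ = L ^ e * L⁻¹ ^ (q - e) := hprod_eq u hbrU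
  have hσf : σ' = L ^ f * L⁻¹ ^ (q - f) := hprod_eq v hbrV
  have heq : e ≤ q := by
    rw [hedef]; exact le_trans (Finset.card_filter_le _ _) (by simp)
  have hfq : f ≤ q := by
    rw [hfdef]; exact le_trans (Finset.card_filter_le _ _) (by simp)
  -- test points
  obtain ⟨δ, hδ0, haffU⟩ := hc.slope_right u q (fun j _ => hbrU j)
  obtain ⟨δ', hδ'0, haffV⟩ := hc.slope_left v q (fun j _ => hbrV j)
  set y₀ := u + min δ ((v - u)/2) with hy₀def
  set y₁ := v - min δ' ((v - u)/2) with hy₁def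
  have hy₀Ioo : y₀ ∈ Ioo u v := by
    constructor
    · rw [hy₀def]; have := lt_min hδ0 (by linarith : (0:ℝ) < (v-u)/2); linarith
    · rw [hy₀def]; have := min_le_right δ ((v-u)/2); linarith
  have hy₁Ioo : y₁ ∈ Ioo u v := by
    constructor
    · rw [hy₁def]; have := min_le_right δ' ((v-u)/2); linarith
    · rw [hy₁def]; have := lt_min hδ'0 (by linarith : (0:ℝ) < (v-u)/2); linarith
  have hφ₀ : F^[q] y₀ - y₀ - p = (σ - 1) * (y₀ - u) := by
    have h1 := haffU y₀ ⟨by linarith [hy₀Ioo.1], by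
      rw [hy₀def]; have := min_le_left δ ((v-u)/2); linarith⟩
    have h2 : F^[q] u = u + p := huP
    rw [h2] at h1; linarith [h1]
  have hφ₁ : F^[q] y₁ - y₁ - p = (σ' - 1) * (y₁ - v) := by
    have h1 := haffV y₁ ⟨by
      rw [hy₁def]; have := min_le_left δ' ((v-u)/2); linarith, by linarith [hy₁Ioo.2]⟩
    have h2 : F^[q] v = v + p := hvP
    rw [h2] at h1; linarith [h1]
  -- sign constancy via IVT
  have hIVT : ∀ z w, z ∈ Ioo u v → w ∈ Ioo u v → F^[q] z - z - p ≤ 0 →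
      0 ≤ F^[q] w - w - p → False := by
    intro z w hz hw h1 h2
    have hcont : Continuous (fun x => F^[q] x - x - (p:ℝ)) := by
      apply Continuous.sub
      apply Continuous.sub (hc.iter_cont q) continuous_id
      exact continuous_const
    rcases le_total z w with hzw | hzw
    · have := intermediate_value_Icc hzw hcont.continuousOn (a := z) (b := w)
      have h0 : (0:ℝ) ∈ Icc (F^[q] z - z - p) (F^[q] w - w - p) := ⟨h1, h2⟩
      obtain ⟨ζ, hζ1, hζ2⟩ := this h0
      apply hgap ζ ⟨lt_of_lt_of_le hz.1 hζ1.1, lt_of_le_of_lt hζ1.2 hw.2⟩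
      change F^[q] ζ - ζ - (p:ℝ) = 0 at hζ2
      show F^[q] ζ = ζ + (p:ℝ); linarith [hζ2]
    · have := intermediate_value_Icc' hzw hcont.continuousOn (a := w) (b := z)
      have h0 : (0:ℝ) ∈ Icc (F^[q] z - z - p) (F^[q] w - w - p) := ⟨h1, h2⟩
      obtain ⟨ζ, hζ1, hζ2⟩ := this h0
      apply hgap ζ ⟨lt_of_lt_of_le hw.1 hζ1.1, lt_of_le_of_lt hζ1.2 hz.2⟩
      change F^[q] ζ - ζ - (p:ℝ) = 0 at hζ2
      show F^[q] ζ = ζ + (p:ℝ); linarith [hζ2]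
  have hy₀u : 0 < y₀ - u := by linarith [hy₀Ioo.1]
  have hy₁v : y₁ - v < 0 := by linarith [hy₁Ioo.2]
  have hσne : σ ≠ 1 := by
    intro h
    apply hgap y₀ hy₀Ioo
    show F^[q] y₀ = y₀ + (p:ℝ)
    rw [h] at hφ₀; simp at hφ₀; linarith
  have hσ'ne : σ' ≠ 1 := by
    intro h
    apply hgap y₁ hy₁Ioo
    show F^[q] y₁ = y₁ + (p:ℝ)
    rw [h] at hφ₁; simp at hφ₁; linarith
  -- the two possible sign configurations force |e - f| ≥ 2
  have hef : (m + 1 ≤ e ∧ f + 1 ≤ m) ∨ (m + 1 ≤ f ∧ e + 1 ≤ m) := by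
    rcases lt_or_gt_of_ne hσne with hσlt | hσgt
    · -- σ < 1 : sign is negative on the gap, hence σ' > 1
      have hσ'gt : 1 < σ' := by
        rcases lt_or_gt_of_ne hσ'ne with h | h
        · exfalso
          apply hIVT y₀ y₁ hy₀Ioo hy₁Ioo
          · rw [hφ₀]
            nlinarith
          · rw [hφ₁]
            nlinarith
        · exact h
      right
      constructor
      · have h1 : q - f < f := hc.LL_gt1.1 (by rw [← hσf]; exact hσ'gt)
        omega
      · have h2 : e < q - e := hc.LL_lt1.1 (by rw [← hσe]; exact hσlt)
        omega
    · -- σ > 1 : sign positive, hence σ' < 1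
      have hσ'lt : σ' < 1 := by
        rcases lt_or_gt_of_ne hσ'ne with h | h
        · exact h
        · exfalso
          apply hIVT y₁ y₀ hy₁Ioo hy₀Ioo
          · rw [hφ₁]
            nlinarith
          · rw [hφ₀]
            nlinarith
      left
      constructor
      · have h1 : q - e < e := hc.LL_gt1.1 (by rw [← hσe]; exact hσgt)
        omega
      · have h2 : f < q - f := hc.LL_lt1.1 (by rw [← hσf]; exact hσ'lt)
        omega
  -- counting argument: two indices with the same type of crossing give a contradiction
  have final : ∀ c : ℝ, ∀ D : Finset ℕ, D ⊆ range q →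
      (∀ j ∈ D, ∃ k : ℤ, c + (k:ℝ) ∈ Ioo (F^[j] u) (F^[j] v)) → 2 ≤ D.card → False := by
    intro c D hDsub hDcross hDcard
    obtain ⟨i, hiD, j, hjD, hij⟩ := Finset.one_lt_card.1 (show 1 < D.card by omega)
    obtain ⟨ki, hki⟩ := hDcross i hiD
    obtain ⟨kj, hkj⟩ := hDcross j hjD
    rcases lt_or_gt_of_ne hij with h | h
    · exact disj i j h (Finset.mem_range.1 (hDsub hjD)) c ki kj hki hkj
    · exact disj j i h (Finset.mem_range.1 (hDsub hiD)) c kj ki hkj hki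
  rcases hef with ⟨he1, hf1⟩ | ⟨hf1, he1⟩
  · -- e ≥ m+1, f ≤ m-1 : at least two B-crossings
    set D := (range q).filter (fun j => InExp A B (F^[j] u) ∧ InCon A B (F^[j] v)) with hDdef
    have hsub : (range q).filter (fun j => InExp A B (F^[j] u)) ⊆
        ((range q).filter (fun j => InExp A B (F^[j] v))) ∪ D := by
      intro j hj
      have hj1 := Finset.mem_filter.1 hj
      rcases hbrV j with hcn | hex
      · exact Finset.mem_union_right _ (Finset.mem_filter.2 ⟨hj1.1, hj1.2, hcn⟩)
      · exact Finset.mem_union_left _ (Finset.mem_filter.2 ⟨hj1.1, hex⟩)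
    have hcard : e ≤ f + D.card := by
      calc e ≤ (((range q).filter (fun j => InExp A B (F^[j] v))) ∪ D).card :=
            Finset.card_le_card hsub
        _ ≤ f + D.card := Finset.card_union_le _ _
    apply final B D (Finset.filter_subset _ _) _ (by omega)
    intro j hj
    have hj1 := Finset.mem_filter.1 hj
    obtain ⟨k, hk1, hk2⟩ := hc.cross_B (htslt j) (hgaple1 j) hj1.2.1 hj1.2.2
    exact ⟨k, hk1, hk2⟩
  · -- f ≥ m+1, e ≤ m-1 : at least two A-crossings
    set D := (range q).filter (fun j => InCon A B (F^[j] u) ∧ InExp A B (F^[j] v)) with hDdef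
    have hsub : (range q).filter (fun j => InExp A B (F^[j] v)) ⊆
        ((range q).filter (fun j => InExp A B (F^[j] u))) ∪ D := by
      intro j hj
      have hj1 := Finset.mem_filter.1 hj
      rcases hbrU j with hcn | hex
      · exact Finset.mem_union_right _ (Finset.mem_filter.2 ⟨hj1.1, hcn, hj1.2⟩)
      · exact Finset.mem_union_left _ (Finset.mem_filter.2 ⟨hj1.1, hex⟩)
    have hcard : f ≤ e + D.card := by
      calc f ≤ (((range q).filter (fun j => InExp A B (F^[j] u))) ∪ D).card :=
            Finset.card_le_card hsub
        _ ≤ e + D.card := Finset.card_union_le _ _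
    apply final A D (Finset.filter_subset _ _) _ (by omega)
    intro j hj
    have hj1 := Finset.mem_filter.1 hj
    obtain ⟨k, hk1, hk2⟩ := hc.cross_A (htslt j) (hgaple1 j) hj1.2.1 hj1.2.2
    exact ⟨k, hk1, hk2⟩

end Core
end Stmt6

namespace Stmt6
namespace Core
set_option linter.unusedSectionVars false

variable {F : ℝ → ℝ} {A B L : ℝ} (hc : Core F A B L)
include hc

/-- strict monotonicity of `x ↦ F x + x` -/
lemma psi_mono : StrictMono (fun x => F x + x) := by
  intro a b hab
  have := hc.mono hab
  dsimp
  linarith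

/-- If `B` is periodic (with even period) then so is `A`. -/
lemma iter_add_nat (n : ℕ) (x : ℝ) (r : ℕ) : F^[n] (x + (r:ℝ)) = F^[n] x + r := by
  have h := hc.iter_add_int n x (r:ℤ)
  push_cast at h
  exact h

lemma iter_sub_nat (n : ℕ) (x : ℝ) (r : ℕ) : F^[n] (x - (r:ℝ)) = F^[n] x - r := by
  have h := hc.iter_add_int n (x - (r:ℝ)) (r:ℤ)
  have e : x - (r:ℝ) + ((r:ℤ):ℝ) = x := by push_cast; ring
  rw [e] at h
  have e2 : ((r:ℤ):ℝ) = (r:ℝ) := by push_cast; ring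
  rw [e2] at h
  linarith

/-- If `B` is periodic (with even period) then so is `A`. -/
lemma B_to_A {p m : ℕ} (hm : 0 < m) (hp : Odd p) (hB : F^[2*m] B = B + p) :
    F^[2*m] A = A + p := by
  have hFB : F B = -B := by
    have := hc.FB 0
    norm_num at this
    convert this using 2 <;> norm_num
  set y := F^[m] B with hydef
  have h1 : F^[m] (-F y) = B := by
    have h := hc.iter_finv m B
    rw [hFB, neg_neg] at h
    exact h
  have hmm : ∀ z : ℝ, F^[m] (F^[m] z) = F^[2*m] z := by
    intro z
    rw [← Function.iterate_add_apply]
    congr 1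
    omega
  have h2 : F^[2*m] (-F y) = y := by
    rw [← hmm, h1]
  have e2 : F^[2*m] y = y + p := by
    rw [hydef, hc.iter_comm (2*m) m, hB,
      show B + (p:ℝ) = B + ((p:ℤ):ℝ) by push_cast; ring, hc.iter_add_int]
    push_cast; ring
  have h3 : F^[2*m] (y - (p:ℝ)) = y := by
    rw [hc.iter_sub_nat, e2]; ring
  have h4 : -F y = y - (p:ℝ) := (hc.iter_mono (2*m)).injective (h2.trans h3.symm)
  obtain ⟨r, hr⟩ := hp
  have h5 : F (A + (r:ℝ)) + (A + (r:ℝ)) = p := by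
    have h := hc.FA (r:ℤ)
    push_cast at h
    rw [h]
    push_cast [hr]; ring
  have h6 : F y + y = p := by linarith [h4]
  have h7 : y = A + (r:ℝ) := by
    apply hc.psi_mono.injective
    dsimp
    rw [h6, h5]
  -- conclude
  have e3 : A = y - (r:ℝ) := by rw [h7]; ring
  rw [e3, hc.iter_sub_nat, e2, h7]
  push_cast [hr]; ring

/-- full statement at the abstract level -/
theorem main {p q : ℕ} (hq : 0 < q) (heven : Even q) (hpq : Nat.Coprime p q) :
    rotationNumber F = (p : ℝ) / (q : ℝ) ↔ F^[q] A = A + (p : ℝ) := by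
  constructor
  · intro hrot
    obtain ⟨m', hm'⟩ := heven
    have hqm : q = 2 * m' := by omega
    have hm0 : 0 < m' := by omega
    have hrot' : rotationNumber F = ((p:ℤ):ℝ) / (q:ℝ) := by push_cast; exact hrot
    have hpodd : Odd p := by
      rcases Nat.even_or_odd p with he | ho
      · exfalso
        obtain ⟨a, ha⟩ := he
        have h2 : 2 ∣ Nat.gcd p q := Nat.dvd_gcd ⟨a, by omega⟩ ⟨m', by omega⟩
        rw [hpq] at h2
        omega
      · exact ho
    rcases hc.main_core hqm hm0 hpq hrot with h | h
    · exact h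
    · have := hc.B_to_A hm0 hpodd (by rw [← hqm]; exact h)
      rw [← hqm] at this
      exact this
  · intro hiter
    have := (hc.rot_rat_iff (p := (p:ℤ)) hq).2 ⟨A, by push_cast; exact hiter⟩
    push_cast at this
    exact this

end Core
end Stmt6

/-- for p/q in lowest terms with q even,
ρ(F_{ℓ,α,θ}) = p/q if and only if F^[q](a₀) = a₀ + p. -/
theorem stmt6 (ℓ α θ : ℝ) (hℓ : 0 < ℓ) (hα : 0 < α) (hαθ : α < θ)
    (hθ : θ < π / 2) (htan : Real.tan θ > 2 * ℓ + Real.tan α)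
    (p q : ℕ) (hq : 0 < q) (heven : Even q) (hpq : Nat.Coprime p q) :
    rotationNumber (Ftrap ℓ α θ) = (p : ℝ) / (q : ℝ) ↔
      (Ftrap ℓ α θ)^[q] (brk0 ℓ θ) = brk0 ℓ θ + (p : ℝ) := by
  exact (Stmt6.ftrap_core hℓ hα hαθ hθ htan).main hq heven hpq
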